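/- For an admissible column C with split sets I (doubled unbarred letters) and J, the set of entries of Φ(C) equals (J ∪ -J ∪ C) \ (I ∪ -I), where Φ(C) is the column whose unbarred entries are those of ℓC and whose barred entries are those of rC. In particular x and -x both occur in Φ(C) if and only if x ∈ J or -x ∈ J, and an entry x occurs in Φ(C) with -x absent if and only if x occurs in C with -x absent. -/

import Mathlib

/-- The alphabet `[±n] = {1 < 2 < ⋯ < n < n̄ < ⋯ < 1̄}` is encoded as `{1, …, 2n} ⊆ ℕ`
with the usual order, the barred letter `ī` being encoded as `2n+1-i`. -/
def bar (n x : ℕ) : ℕ := 2 * n + 1 - x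

/-- A column over `[±n]`: a strictly increasing list with entries in `{1, …, 2n}`. -/
def IsColumn (n : ℕ) (C : List ℕ) : Prop :=
  C.Chain' (· < ·) ∧ ∀ x ∈ C, 1 ≤ x ∧ x ≤ 2 * n

/-- The one column condition (1CC): for every unbarred `i` with both `i` and `ī` in `C`,
the number of entries `x` with `x ≤ i` or `x ≥ ī` is at most `i`. -/
def OCC (n : ℕ) (C : List ℕ) : Prop :=
  ∀ i, 1 ≤ i → i ≤ n → i ∈ C → bar n i ∈ C →
    C.countP (fun x => decide (x ≤ i ∨ bar n i ≤ x)) ≤ i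

/-- The set `I` of unbarred letters `z` such that both `z` and `z̄` occur in `C`,
listed in decreasing order `z₁ > z₂ > ⋯ > z_r`. -/
def Ilist (n : ℕ) (C : List ℕ) : List ℕ :=
  ((List.range (n + 1)).filter (fun z => decide (1 ≤ z ∧ z ∈ C ∧ bar n z ∈ C))).reverse

/-- The greatest unbarred letter `t < bound` with `t ∉ C` and `t̄ ∉ C`, if any. -/
def pickBelow (n : ℕ) (C : List ℕ) (bound : ℕ) : Option ℕ :=
  ((List.range bound).filter (fun t => decide (1 ≤ t ∧ t ≤ n ∧ t ∉ C ∧ bar n t ∉ C))).max?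

/-- The greedy construction of the set `J = {t₁ > ⋯ > t_r}` of Definition of splitting:
`t₁` is the greatest letter `< z₁` with `t₁, t̄₁ ∉ C` and `tᵢ` is the greatest letter
`< min (tᵢ₋₁, zᵢ)` with `tᵢ, t̄ᵢ ∉ C`; returns `none` if at some stage no letter exists. -/
def splitJ (n : ℕ) (C : List ℕ) : List ℕ → ℕ → Option (List ℕ)
  | [], _ => some []
  | z :: zs, bound =>
    match pickBelow n C (min bound z) with
    | none => none
    | some t => (splitJ n C zs t).map (t :: ·)

def JlistOpt (n : ℕ) (C : List ℕ) : Option (List ℕ) := splitJ n C (Ilist n C) (n + 1)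

/-- `C` can be split: the set `J` of the splitting definition exists. -/
def CanSplit (n : ℕ) (C : List ℕ) : Prop := (JlistOpt n C).isSome = true

/-- The set `J = {t₁ > ⋯ > t_r}` (empty if `C` cannot be split). -/
def Jlist (n : ℕ) (C : List ℕ) : List ℕ := (JlistOpt n C).getD []

def sortCol (L : List ℕ) : List ℕ := L.mergeSort (· ≤ ·)

/-- The right column `rC`: replace each barred `z̄ᵢ` (for `zᵢ ∈ I`) by `t̄ᵢ` and reorder. -/
def rCol (n : ℕ) (C : List ℕ) : List ℕ :=
  sortCol ((C.filter (fun x => decide (x ∉ (Ilist n C).map (bar n)))) ++ (Jlist n C).map (bar n))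

/-- The left column `ℓC`: replace each unbarred `zᵢ ∈ I` by `tᵢ` and reorder. -/
def lCol (n : ℕ) (C : List ℕ) : List ℕ :=
  sortCol ((C.filter (fun x => decide (x ∉ Ilist n C))) ++ Jlist n C)

/-- `Φ(C)`: the column of the same size whose unbarred entries are taken from `ℓC`
and whose barred entries are taken from `rC`. -/
def PhiCol (n : ℕ) (C : List ℕ) : List ℕ :=
  sortCol ((lCol n C).filter (fun x => decide (x ≤ n)) ++
    (rCol n C).filter (fun x => decide (n < x)))

lemma pickBelow_prop {n : ℕ} {C : List ℕ} {b t : ℕ} (h : pickBelow n C b = some t) :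
    1 ≤ t ∧ t ≤ n ∧ t ∉ C ∧ bar n t ∉ C := by
  have hm := List.max?_mem h
  simp only [List.mem_filter, List.mem_range, decide_eq_true_eq] at hm
  exact hm.2

lemma splitJ_prop {n : ℕ} {C : List ℕ} : ∀ (zs : List ℕ) (b : ℕ) (L : List ℕ),
    splitJ n C zs b = some L → ∀ t ∈ L, 1 ≤ t ∧ t ≤ n ∧ t ∉ C ∧ bar n t ∉ C
  | [], b, L => by
    intro h t ht
    simp only [splitJ, Option.some.injEq] at h
    subst h; simp at ht
  | z :: zs, b, L => by
    intro h t ht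
    simp only [splitJ] at h
    cases hp : pickBelow n C (min b z) with
    | none => rw [hp] at h; simp at h
    | some u =>
      rw [hp] at h
      simp only [Option.map_eq_some_iff] at h
      obtain ⟨L', hL', rfl⟩ := h
      rcases List.mem_cons.mp ht with rfl | hmem
      · exact pickBelow_prop hp
      · exact splitJ_prop zs u L' hL' t hmem

lemma Jlist_prop {n : ℕ} {C : List ℕ} : ∀ t ∈ Jlist n C, 1 ≤ t ∧ t ≤ n ∧ t ∉ C ∧ bar n t ∉ C := by
  intro t ht
  unfold Jlist JlistOpt at ht
  cases h : splitJ n C (Ilist n C) (n+1) with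
  | none => rw [h] at ht; simp at ht
  | some L => rw [h] at ht; exact splitJ_prop _ _ _ h t ht

lemma Ilist_mem {n : ℕ} {C : List ℕ} (x : ℕ) :
    x ∈ Ilist n C ↔ 1 ≤ x ∧ x ≤ n ∧ x ∈ C ∧ bar n x ∈ C := by
  simp only [Ilist, List.mem_reverse, List.mem_filter, List.mem_range, decide_eq_true_eq]
  constructor
  · rintro ⟨h1, h2, h3, h4⟩; exact ⟨h2, by omega, h3, h4⟩
  · rintro ⟨h1, h2, h3, h4⟩; exact ⟨by omega, h1, h3, h4⟩

theorem phiCol_entries (n : ℕ) (C : List ℕ) (hC : IsColumn n C) (hadm : OCC n C) :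
    (∀ x, x ∈ PhiCol n C ↔ ((x ∈ Jlist n C ∨ x ∈ (Jlist n C).map (bar n) ∨ x ∈ C) ∧
      x ∉ Ilist n C ∧ x ∉ (Ilist n C).map (bar n))) ∧
    (∀ x, 1 ≤ x → x ≤ 2 * n →
      ((x ∈ PhiCol n C ∧ bar n x ∈ PhiCol n C) ↔ (x ∈ Jlist n C ∨ bar n x ∈ Jlist n C))) ∧
    (∀ x, 1 ≤ x → x ≤ 2 * n →
      ((x ∈ PhiCol n C ∧ bar n x ∉ PhiCol n C) ↔ (x ∈ C ∧ bar n x ∉ C))) := by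
  obtain ⟨-, hCr⟩ := hC
  have hJ := @Jlist_prop n C
  have hI := @Ilist_mem n C
  -- membership in the map of bar over Ilist
  have hbI : ∀ x, x ∈ (Ilist n C).map (bar n) ↔ (n < x ∧ x ≤ 2 * n ∧ x ∈ C ∧ bar n x ∈ C) := by
    intro x
    simp only [List.mem_map]
    constructor
    · rintro ⟨z, hz, rfl⟩
      obtain ⟨h1, h2, h3, h4⟩ := (hI z).mp hz
      have hb : bar n (bar n z) = z := by simp only [bar]; omega
      refine ⟨by simp only [bar]; omega, by simp only [bar]; omega, h4, by rw [hb]; exact h3⟩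
    · rintro ⟨h1, h2, h3, h4⟩
      refine ⟨bar n x, (hI _).mpr ⟨by simp only [bar]; omega, by simp only [bar]; omega, h4, ?_⟩,
        by simp only [bar]; omega⟩
      have hb : bar n (bar n x) = x := by simp only [bar]; omega
      rw [hb]; exact h3
  -- raw membership in PhiCol
  have hPhi : ∀ x, x ∈ PhiCol n C ↔
      ((x ≤ n ∧ ((x ∈ C ∧ x ∉ Ilist n C) ∨ x ∈ Jlist n C)) ∨
       (n < x ∧ ((x ∈ C ∧ x ∉ (Ilist n C).map (bar n)) ∨ x ∈ (Jlist n C).map (bar n)))) := by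
    intro x
    simp only [PhiCol, lCol, rCol, sortCol, List.mem_mergeSort, List.mem_append,
      List.mem_filter, decide_eq_true_eq]
    tauto
  -- part 1
  have key : ∀ x, x ∈ PhiCol n C ↔ ((x ∈ Jlist n C ∨ x ∈ (Jlist n C).map (bar n) ∨ x ∈ C) ∧
      x ∉ Ilist n C ∧ x ∉ (Ilist n C).map (bar n)) := by
    intro x
    rw [hPhi x]
    constructor
    · rintro (⟨hxn, ⟨hxC, hxI⟩ | hxJ⟩ | ⟨hxn, ⟨hxC, hxbI⟩ | hxbJ⟩)
      · exact ⟨Or.inr (Or.inr hxC), hxI, fun h => by have := (hbI x).mp h; omega⟩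
      · obtain ⟨h1, h2, h3, h4⟩ := hJ x hxJ
        exact ⟨Or.inl hxJ, fun h => h3 ((hI x).mp h).2.2.1,
          fun h => by have := (hbI x).mp h; omega⟩
      · exact ⟨Or.inr (Or.inr hxC), fun h => by have := (hI x).mp h; omega, hxbI⟩
      · refine ⟨Or.inr (Or.inl hxbJ), fun h => by have := (hI x).mp h; omega, fun h => ?_⟩
        obtain ⟨t, htJ, rfl⟩ := List.mem_map.mp hxbJ
        exact (hJ t htJ).2.2.2 ((hbI _).mp h).2.2.1
    · rintro ⟨hxJ | hxbJ | hxC, hnI, hnbI⟩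
      · exact Or.inl ⟨(hJ x hxJ).2.1, Or.inr hxJ⟩
      · obtain ⟨t, htJ, rfl⟩ := List.mem_map.mp hxbJ
        obtain ⟨h1, h2, -, -⟩ := hJ t htJ
        exact Or.inr ⟨by simp only [bar]; omega, Or.inr hxbJ⟩
      · rcases le_or_gt x n with h | h
        · exact Or.inl ⟨h, Or.inl ⟨hxC, hnI⟩⟩
        · exact Or.inr ⟨h, Or.inl ⟨hxC, hnbI⟩⟩
  refine ⟨key, ?_, ?_⟩
  -- part 2
  · intro x h1 h2
    have hbb : bar n (bar n x) = x := by simp only [bar]; omega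
    have hbr1 : 1 ≤ bar n x := by simp only [bar]; omega
    have hbr2 : bar n x ≤ 2 * n := by simp only [bar]; omega
    constructor
    · rintro ⟨hx, hbx⟩
      rw [key] at hx hbx
      obtain ⟨hm, hnI, hnbI⟩ := hx
      obtain ⟨hm', hnI', hnbI'⟩ := hbx
      by_contra hcon
      push_neg at hcon
      obtain ⟨hxJ, hbxJ⟩ := hcon
      have hxC : x ∈ C := by
        rcases hm with h | h | h
        · exact absurd h hxJ
        · obtain ⟨t, htJ, rfl⟩ := List.mem_map.mp h
          have : bar n (bar n t) = t := by
            have := (hJ t htJ).1; have := (hJ t htJ).2.1; simp only [bar]; omega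
          exact absurd (this ▸ hbxJ) (fun h' => h' htJ)
        · exact h
      have hbxC : bar n x ∈ C := by
        rcases hm' with h | h | h
        · exact absurd h hbxJ
        · obtain ⟨t, htJ, heq⟩ := List.mem_map.mp h
          have ht2 := (hJ t htJ).2.1
          have : t = x := by simp only [bar] at heq; omega
          exact absurd (this ▸ htJ) hxJ
        · exact h
      rcases le_or_gt x n with h | h
      · exact hnI ((hI x).mpr ⟨h1, h, hxC, hbxC⟩)
      · exact hnbI ((hbI x).mpr ⟨h, h2, hxC, hbxC⟩)
    · rintro (hxJ | hbxJ)
      · obtain ⟨ht1, ht2, ht3, ht4⟩ := hJ x hxJ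
        constructor
        · rw [key]
          exact ⟨Or.inl hxJ, fun h => ht3 ((hI x).mp h).2.2.1,
            fun h => by have := (hbI x).mp h; omega⟩
        · rw [key]
          refine ⟨Or.inr (Or.inl (List.mem_map.mpr ⟨x, hxJ, rfl⟩)),
            fun h => ht4 ((hI _).mp h).2.2.1, fun h => ht4 ((hbI _).mp h).2.2.1⟩
      · obtain ⟨ht1, ht2, ht3, ht4⟩ := hJ _ hbxJ
        rw [hbb] at ht4
        constructor
        · rw [key]
          exact ⟨Or.inr (Or.inl (List.mem_map.mpr ⟨bar n x, hbxJ, hbb⟩)),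
            fun h => ht4 ((hI x).mp h).2.2.1, fun h => ht4 ((hbI x).mp h).2.2.1⟩
        · rw [key]
          exact ⟨Or.inl hbxJ, fun h => ht3 ((hI _).mp h).2.2.1,
            fun h => by have := (hbI _).mp h; omega⟩
  -- part 3
  · intro x h1 h2
    have hbb : bar n (bar n x) = x := by simp only [bar]; omega
    constructor
    · rintro ⟨hx, hbx⟩
      rw [key] at hx
      obtain ⟨hm, hnI, hnbI⟩ := hx
      have hbxC : bar n x ∉ C := by
        intro hbxC
        have hxC : x ∈ C := by
          rcases hm with h | h | h
          · exact absurd hbxC (hJ x h).2.2.2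
          · obtain ⟨t, htJ, rfl⟩ := List.mem_map.mp h
            have : bar n (bar n t) = t := by
              have := (hJ t htJ).1; have := (hJ t htJ).2.1; simp only [bar]; omega
            exact absurd (this ▸ hbxC) (hJ t htJ).2.2.1
          · exact h
        rcases le_or_gt x n with h | h
        · exact hnI ((hI x).mpr ⟨h1, h, hxC, hbxC⟩)
        · exact hnbI ((hbI x).mpr ⟨h, h2, hxC, hbxC⟩)
      refine ⟨?_, hbxC⟩
      -- bar x not in J, not in bar J
      have hbxJ : bar n x ∉ Jlist n C := by
        intro h
        apply hbx
        rw [key]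
        obtain ⟨ht1, ht2, ht3, ht4⟩ := hJ _ h
        exact ⟨Or.inl h, fun h' => ht3 ((hI _).mp h').2.2.1,
          fun h' => by have := (hbI _).mp h'; omega⟩
      rcases hm with h | h | h
      · exfalso
        apply hbx
        rw [key]
        obtain ⟨ht1, ht2, ht3, ht4⟩ := hJ x h
        exact ⟨Or.inr (Or.inl (List.mem_map.mpr ⟨x, h, rfl⟩)),
          fun h' => ht4 ((hI _).mp h').2.2.1, fun h' => ht4 ((hbI _).mp h').2.2.1⟩
      · obtain ⟨t, htJ, rfl⟩ := List.mem_map.mp h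
        have heq : bar n (bar n t) = t := by
          have := (hJ t htJ).1; have := (hJ t htJ).2.1; simp only [bar]; omega
        exfalso
        refine hbxJ ?_
        rw [← heq] at htJ; exact htJ
      · exact h
    · rintro ⟨hxC, hbxC⟩
      constructor
      · rw [key]
        exact ⟨Or.inr (Or.inr hxC), fun h => hbxC ((hI x).mp h).2.2.2,
          fun h => hbxC ((hbI x).mp h).2.2.2⟩
      · intro h
        rw [key] at h
        obtain ⟨hm, -, -⟩ := h
        rcases hm with h | h | h
        · refine (hJ _ h).2.2.2 ?_
          rw [hbb]; exact hxC
        · obtain ⟨t, htJ, heq⟩ := List.mem_map.mp h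
          have ht2 := (hJ t htJ).2.1
          have : t = x := by simp only [bar] at heq; omega
          exact (hJ t htJ).2.2.1 (this ▸ hxC)
        · exact hbxC h
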